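/- Let m be a positive integer and d = 2^m. Let RM(1,m) ⊆ 𝔽₂^d be the first-order Reed–Muller code of length d, i.e., indexing coordinates by the points of 𝔽₂^m, the set of all functions x ↦ b + ⟨c, x⟩ with c ∈ 𝔽₂^m and b ∈ 𝔽₂. Let a be a positive integer and let C ⊆ 𝔽₂^d be a binary linear code containing RM(1,m) such that the set of Hamming weights of codewords of C is {0, d/2 − a, d/2, d/2 + a, d}. Let u₁, …, u_f be a complete set of coset representatives of C modulo RM(1,m), and let ψ : 𝔽₂^d → {±1}^d ⊆ ℝ^d send (x_i) to ((−1)^{x_i}). Then the sets ψ(u₁ + RM(1,m)), …, ψ(u_f + RM(1,m)) form a partition of ψ(C) in which each part is a cross polytope of norm √d (a set {v₁,…,v_d, −v₁,…,−v_d} with ⟨v_i,v_j⟩ = d·δ_{ij}), and the inner product of any two vectors lying in distinct parts belongs to {2a, −2a, 0}. -/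

import Mathlib

/-- The first-order Reed–Muller code `RM(1, m)` of length `2^m`, with coordinates indexed
by the points of `𝔽₂^m`: all functions `x ↦ b + ⟨c, x⟩` with `c ∈ 𝔽₂^m`, `b ∈ 𝔽₂`. -/
def RM1 (m : ℕ) : Set ((Fin m → ZMod 2) → ZMod 2) :=
  {g | ∃ c : Fin m → ZMod 2, ∃ b : ZMod 2, g = fun x => b + ∑ i, c i * x i}

/-- The map `ψ : 𝔽₂^d → {±1}^d ⊆ ℝ^d` sending `(x_t)` to `((-1)^(x_t))`. -/
def psi {m : ℕ} (x : (Fin m → ZMod 2) → ZMod 2) : (Fin m → ZMod 2) → ℝ :=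
  fun t => (-1 : ℝ) ^ (x t).val

lemma zmod2_cases (x : ZMod 2) : x = 0 ∨ x = 1 := by revert x; decide

lemma zmod2_add_one_ne (x : ZMod 2) : x + 1 ≠ x := by revert x; decide

lemma zmod2_add_one_one (x : ZMod 2) : x + 1 + 1 = x := by revert x; decide

lemma zmod2_add_eq_zero (x y : ZMod 2) : x + y = 0 ↔ x = y := by revert x y; decide

lemma zmod2_add_eq_one (x y : ZMod 2) : x + y = 1 ↔ x = y + 1 := by revert x y; decide

lemma neg_one_pow_add (x y : ZMod 2) :
    (-1:ℝ) ^ (x + y).val = (-1:ℝ) ^ x.val * (-1:ℝ) ^ y.val := by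
  rcases zmod2_cases x with rfl | rfl <;> rcases zmod2_cases y with rfl | rfl <;>
    norm_num [show ((1:ZMod 2)+1).val = 0 by decide, show (2:ZMod 2).val = 0 by decide,
      show ((0:ZMod 2)+1).val = 1 from rfl,
      show ((1:ZMod 2)+0).val = 1 from rfl, show ((0:ZMod 2)+0).val = 0 from rfl,
      show (0:ZMod 2).val = 0 from rfl, show (1:ZMod 2).val = 1 from rfl]

lemma psi_injective {m : ℕ} : Function.Injective (@psi m) := by
  intro x y h
  funext t
  have h1 : (-1:ℝ) ^ (x t).val = (-1:ℝ) ^ (y t).val := congrFun h t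
  rcases zmod2_cases (x t) with hx | hx <;> rcases zmod2_cases (y t) with hy | hy <;>
    rw [hx, hy] at h1 <;> rw [hx, hy] <;>
    norm_num [show (0:ZMod 2).val = 0 from rfl, show (1:ZMod 2).val = 1 from rfl] at h1

lemma card_pts (m : ℕ) : Fintype.card (Fin m → ZMod 2) = 2 ^ m := by
  simp [Fintype.card_fun]

lemma neg_one_pow_val (x : ZMod 2) : (-1:ℝ) ^ x.val = if x = 0 then 1 else -1 := by
  rcases zmod2_cases x with rfl | rfl <;>
    norm_num [show (0:ZMod 2).val = 0 from rfl, show (1:ZMod 2).val = 1 from rfl]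

lemma sum_neg_one {m : ℕ} (y : (Fin m → ZMod 2) → ZMod 2) :
    ∑ t, (-1:ℝ) ^ (y t).val
      = ((2^m : ℕ) : ℝ) - 2 * ((Finset.univ.filter fun t => y t ≠ 0).card : ℝ) := by
  classical
  have h1 : ∑ t, (-1:ℝ) ^ (y t).val = ∑ t, if y t = 0 then (1:ℝ) else -1 :=
    Finset.sum_congr rfl fun t _ => neg_one_pow_val (y t)
  rw [h1, Finset.sum_ite, Finset.sum_const, Finset.sum_const]
  have h2 : (Finset.univ.filter fun t => y t = 0).card
      + (Finset.univ.filter fun t => ¬ (y t = 0)).card = 2 ^ m := by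
    rw [Finset.card_filter_add_card_filter_not, Finset.card_univ, card_pts]
  have h3 : (Finset.univ.filter fun t => ¬ (y t = 0)) = (Finset.univ.filter fun t => y t ≠ 0) := rfl
  rw [h3] at h2
  push_cast [← h2]
  ring

lemma char_sum {m : ℕ} (c : Fin m → ZMod 2) :
    ∑ r : Fin m → ZMod 2, (-1:ℝ) ^ (∑ i, c i * r i).val
      = if c = 0 then ((2^m : ℕ) : ℝ) else 0 := by
  classical
  by_cases hc : c = 0
  · subst hc
    rw [if_pos rfl]
    simp only [Pi.zero_apply, zero_mul, Finset.sum_const_zero]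
    simp [show (0:ZMod 2).val = 0 from rfl, card_pts]
  · rw [if_neg hc]
    obtain ⟨i0, hi0⟩ : ∃ i, c i ≠ 0 := by
      by_contra h; push_neg at h; exact hc (funext fun i => h i)
    have hci : c i0 = 1 := (zmod2_cases (c i0)).resolve_left hi0
    have hsum : ∀ r : Fin m → ZMod 2,
        ∑ i, c i * (Function.update r i0 (r i0 + 1)) i = (∑ i, c i * r i) + 1 := by
      intro r
      rw [Fintype.sum_eq_add_sum_compl i0, Fintype.sum_eq_add_sum_compl i0 (fun i => c i * r i)]
      have he : ∀ i ∈ ({i0}ᶜ : Finset (Fin m)),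
          c i * Function.update r i0 (r i0 + 1) i = c i * r i := by
        intro i hi
        rw [Function.update_of_ne (by simpa using hi)]
      rw [Finset.sum_congr rfl he, Function.update_self, hci]
      ring
    apply Finset.sum_ninvolution (g := fun r => Function.update r i0 (r i0 + 1))
    · intro r
      rw [hsum r, neg_one_pow_add]
      simp [show (1:ZMod 2).val = 1 from rfl]
    · intro r _ h
      exact absurd (congrFun h i0) (by simpa using zmod2_add_one_ne (r i0))
    · intro r; exact Finset.mem_univ _
    · intro r
      rw [Function.update_idem, Function.update_self, zmod2_add_one_one,
        Function.update_eq_self]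

lemma RM1_one {m : ℕ} : (1 : ((Fin m → ZMod 2) → ZMod 2)) ∈ RM1 m :=
  ⟨0, 1, by funext x; simp⟩

lemma RM1_add {m : ℕ} {g h : (Fin m → ZMod 2) → ZMod 2}
    (hg : g ∈ RM1 m) (hh : h ∈ RM1 m) : g + h ∈ RM1 m := by
  obtain ⟨c, b, rfl⟩ := hg
  obtain ⟨c', b', rfl⟩ := hh
  refine ⟨c + c', b + b', ?_⟩
  funext x
  simp only [Pi.add_apply, add_mul, Finset.sum_add_distrib]
  ring

lemma psi_sum_mul {m : ℕ} (x y : (Fin m → ZMod 2) → ZMod 2) :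
    ∑ t, psi x t * psi y t
      = ((2^m : ℕ) : ℝ) - 2 * ((Finset.univ.filter fun t => (x + y) t ≠ 0).card : ℝ) := by
  have h : ∀ t, psi x t * psi y t = (-1:ℝ) ^ (((x + y) t).val) := by
    intro t
    simp only [psi, Pi.add_apply, neg_one_pow_add]
  rw [Finset.sum_congr rfl fun t _ => h t, sum_neg_one]

lemma psi_add_one {m : ℕ} (x : (Fin m → ZMod 2) → ZMod 2) :
    psi (x + 1) = - psi x := by
  funext t
  simp only [psi, Pi.neg_apply, Pi.add_apply, Pi.one_apply, neg_one_pow_add,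
    show (1:ZMod 2).val = 1 from rfl]
  ring

lemma fun2_self_add {m : ℕ} (x : (Fin m → ZMod 2) → ZMod 2) : x + x = 0 := by
  funext t
  exact (zmod2_add_eq_zero (x t) (x t)).mpr rfl

lemma zmod2_four (a b c d : ZMod 2) (h : a + b + (c + d) = 1) : a + b = c + (d + 1) := by
  revert a b c d; decide
theorem stmt5 (m : ℕ) (hm : 0 < m) (a : ℕ) (ha : 0 < a)
    (C : Submodule (ZMod 2) ((Fin m → ZMod 2) → ZMod 2))
    (hRM : RM1 m ⊆ (C : Set ((Fin m → ZMod 2) → ZMod 2)))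
    (hwts : {n : ℕ | ∃ x ∈ C, (Finset.univ.filter fun t => x t ≠ 0).card = n}
      = ({0, 2 ^ m / 2 - a, 2 ^ m / 2, 2 ^ m / 2 + a, 2 ^ m} : Set ℕ))
    (f : ℕ) (u : Fin f → ((Fin m → ZMod 2) → ZMod 2))
    (hu : ∀ j, u j ∈ C)
    (hrep : ∀ x ∈ C, ∃! j : Fin f, ∃ w ∈ RM1 m, x = u j + w) :
    (∀ j j', j ≠ j' →
      Disjoint (psi '' {x | ∃ w ∈ RM1 m, x = u j + w})
        (psi '' {x | ∃ w ∈ RM1 m, x = u j' + w})) ∧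
    (⋃ j, psi '' {x | ∃ w ∈ RM1 m, x = u j + w})
      = psi '' (C : Set ((Fin m → ZMod 2) → ZMod 2)) ∧
    (∀ j, ∃ v : (Fin m → ZMod 2) → ((Fin m → ZMod 2) → ℝ),
      (∀ s t, ∑ r, v s r * v t r = if s = t then ((2 ^ m : ℕ) : ℝ) else 0) ∧
      psi '' {x | ∃ w ∈ RM1 m, x = u j + w}
        = Set.range v ∪ Set.range fun s => -(v s)) ∧
    (∀ j j', j ≠ j' →
      ∀ p ∈ psi '' {x | ∃ w ∈ RM1 m, x = u j + w},
      ∀ q ∈ psi '' {x | ∃ w ∈ RM1 m, x = u j' + w},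
        (∑ t, p t * q t) ∈ ({2 * (a : ℝ), -(2 * (a : ℝ)), 0} : Set ℝ)) := by
  classical
  refine ⟨?_, ?_, ?_, ?_⟩
  · -- disjointness
    intro j j' hjj
    rw [Set.disjoint_left]
    rintro p ⟨x, ⟨w, hw, rfl⟩, rfl⟩ ⟨x', ⟨w', hw', hx'⟩, hpx⟩
    have hxx : x' = u j + w := psi_injective hpx
    have hz : u j + w ∈ C := C.add_mem (hu j) (hRM hw)
    have := (hrep (u j + w) hz).unique ⟨w, hw, rfl⟩ ⟨w', hw', by rw [← hxx, hx']⟩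
    exact hjj this
  · -- union
    apply Set.Subset.antisymm
    · rintro p hp
      simp only [Set.mem_iUnion] at hp
      obtain ⟨j, x, ⟨w, hw, rfl⟩, rfl⟩ := hp
      exact ⟨u j + w, C.add_mem (hu j) (hRM hw), rfl⟩
    · rintro p ⟨x, hx, rfl⟩
      obtain ⟨j, hj, -⟩ := hrep x hx
      obtain ⟨w, hw, rfl⟩ := hj
      exact Set.mem_iUnion.mpr ⟨j, ⟨u j + w, ⟨w, hw, rfl⟩, rfl⟩⟩
  · -- cross polytope
    intro j
    refine ⟨fun s => psi (u j + fun x => ∑ i, s i * x i), ?_, ?_⟩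
    · intro s t
      have h1 : ∀ r, psi (u j + fun x => ∑ i, s i * x i) r
          * psi (u j + fun x => ∑ i, t i * x i) r
          = (-1:ℝ) ^ (∑ i, (s i + t i) * r i).val := by
        intro r
        have h4 : (u j + fun x : Fin m → ZMod 2 => ∑ i, s i * x i) r
              + (u j + fun x : Fin m → ZMod 2 => ∑ i, t i * x i) r
            = ∑ i, (s i + t i) * r i := by
          simp only [Pi.add_apply, add_mul, Finset.sum_add_distrib]
          have hz : u j r + u j r = 0 := (zmod2_add_eq_zero _ _).mpr rfl
          rw [show u j r + (∑ i, s i * r i) + (u j r + ∑ i, t i * r i)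
            = (u j r + u j r) + ((∑ i, s i * r i) + ∑ i, t i * r i) by ring, hz, zero_add]
        simp only [psi]
        rw [← neg_one_pow_add, h4]
      rw [Finset.sum_congr rfl fun r _ => h1 r, char_sum]
      have hiff : ((fun i => s i + t i) = 0) ↔ s = t := by
        constructor
        · intro h
          funext i
          exact (zmod2_add_eq_zero _ _).mp (congrFun h i)
        · rintro rfl
          funext i
          exact (zmod2_add_eq_zero _ _).mpr rfl
      rw [if_congr hiff rfl rfl]
    · apply Set.Subset.antisymm
      · rintro p ⟨x, ⟨w, ⟨c, b, rfl⟩, rfl⟩, rfl⟩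
        rcases zmod2_cases b with rfl | rfl
        · left
          refine ⟨c, ?_⟩
          congr 1
          funext x
          simp
        · right
          refine ⟨c, ?_⟩
          have h3 : (u j + fun x => 1 + ∑ i, c i * x i)
              = (u j + fun x => ∑ i, c i * x i) + 1 := by
            funext x
            simp only [Pi.add_apply, Pi.one_apply]
            ring
          rw [h3, psi_add_one]
      · rintro p (⟨s, rfl⟩ | ⟨s, rfl⟩)
        · exact ⟨u j + fun x => ∑ i, s i * x i,
            ⟨fun x => ∑ i, s i * x i, ⟨s, 0, by funext x; simp⟩, rfl⟩, rfl⟩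
        · refine ⟨(u j + fun x => ∑ i, s i * x i) + 1,
            ⟨(fun x => ∑ i, s i * x i) + 1,
              RM1_add ⟨s, 0, by funext x; simp⟩ RM1_one, by rw [add_assoc]⟩, ?_⟩
          rw [psi_add_one]
  · -- inner products between distinct parts
    intro j j' hjj p hp q hq
    obtain ⟨x, ⟨w, hw, rfl⟩, rfl⟩ := hp
    obtain ⟨x', ⟨w', hw', rfl⟩, rfl⟩ := hq
    set y := (u j + w) + (u j' + w') with hy
    have hyC : y ∈ C :=
      C.add_mem (C.add_mem (hu j) (hRM hw)) (C.add_mem (hu j') (hRM hw'))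
    set n := (Finset.univ.filter fun t => y t ≠ 0).card with hn
    have hsum : ∑ t, psi (u j + w) t * psi (u j' + w') t = ((2^m : ℕ) : ℝ) - 2 * (n : ℝ) :=
      psi_sum_mul _ _
    have hwt : n ∈ ({0, 2 ^ m / 2 - a, 2 ^ m / 2, 2 ^ m / 2 + a, 2 ^ m} : Set ℕ) := by
      rw [← hwts]
      exact ⟨y, hyC, rfl⟩
    obtain ⟨m', rfl⟩ : ∃ m', m = m' + 1 := ⟨m - 1, (Nat.succ_pred_eq_of_pos hm).symm⟩
    have hN : 2 ^ (m' + 1) = 2 * 2 ^ m' := by rw [pow_succ]; ring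
    have hhalf : 2 ^ (m' + 1) / 2 = 2 ^ m' := by omega
    have haN : a ≤ 2 ^ m' := by
      have hmem : (2 ^ (m' + 1) / 2 + a)
          ∈ {n : ℕ | ∃ x ∈ C, (Finset.univ.filter fun t => x t ≠ 0).card = n} := by
        rw [hwts]
        right; right; right; left; rfl
      obtain ⟨x0, -, hx0⟩ := hmem
      have hle : (Finset.univ.filter fun t => x0 t ≠ 0).card ≤ 2 ^ (m' + 1) := by
        calc (Finset.univ.filter fun t => x0 t ≠ 0).card
            ≤ Finset.univ.card := Finset.card_filter_le _ _
          _ = 2 ^ (m' + 1) := by rw [Finset.card_univ, card_pts]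
      omega
    simp only [Set.mem_insert_iff, Set.mem_singleton_iff] at hwt
    have huniq := hrep (u j + w) (C.add_mem (hu j) (hRM hw))
    rcases hwt with h0 | h1 | h2 | h3 | h4
    · -- weight 0: impossible
      exfalso
      have hy0 : y = 0 := by
        funext t
        by_contra ht
        have : t ∈ Finset.univ.filter fun t => y t ≠ 0 :=
          Finset.mem_filter.mpr ⟨Finset.mem_univ t, ht⟩
        rw [Finset.card_eq_zero.mp h0] at this
        exact absurd this (Finset.notMem_empty t)
      have heq : u j + w = u j' + w' := by
        funext t
        exact (zmod2_add_eq_zero _ _).mp (congrFun hy0 t)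
      exact hjj (huniq.unique ⟨w, hw, rfl⟩ ⟨w', hw', heq⟩)
    · simp only [Set.mem_insert_iff, Set.mem_singleton_iff]
      left
      rw [hsum, h1, hhalf]
      push_cast [Nat.cast_sub haN, hN]
      ring
    · simp only [Set.mem_insert_iff, Set.mem_singleton_iff]
      right; right
      rw [hsum, h2, hhalf]
      push_cast [hN]
      ring
    · simp only [Set.mem_insert_iff, Set.mem_singleton_iff]
      right; left
      rw [hsum, h3, hhalf]
      push_cast [hN]
      ring
    · -- weight 2^m: impossible
      exfalso
      have hy1 : y = 1 := by
        have huniv : (Finset.univ.filter fun t => y t ≠ 0) = Finset.univ := by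
          apply Finset.eq_univ_of_card
          rw [← hn, h4, card_pts]
        funext t
        have ht : y t ≠ 0 := by
          have := Finset.mem_filter.mp (huniv ▸ Finset.mem_univ t)
          exact this.2
        exact (zmod2_cases (y t)).resolve_left ht
      have heq : u j + w = u j' + (w' + 1) := by
        funext t
        have h := congrFun hy1 t
        simp only [hy, Pi.add_apply, Pi.one_apply] at h
        simp only [Pi.add_apply, Pi.one_apply]
        exact zmod2_four _ _ _ _ h
      exact hjj (huniq.unique ⟨w, hw, rfl⟩ ⟨w' + 1, RM1_add hw' RM1_one, heq⟩)
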